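/- (Proposition 7, sharpness.) For every p, q ∈ [0,1] there exist a probability space and random variables U, V taking values in {0,1} with E[U] = p, E[V] = q, and Var(U − V) = |p − q| − (p − q)²; that is, the bound Var(U − V) ≥ |p − q| − (p − q)² is sharp. -/

import Mathlib

open MeasureTheory ProbabilityTheory Filter

lemma aux_int (r : ℝ) (hr0 : 0 ≤ r) (hr1 : r ≤ 1) :
    ∫ ω, (Set.Iio r).indicator (1 : ℝ → ℝ) ω
      ∂(MeasureTheory.volume.restrict (Set.Icc (0:ℝ) 1)) = r := by
  rw [MeasureTheory.integral_indicator_one measurableSet_Iio, Measure.real,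
    Measure.restrict_apply measurableSet_Iio]
  have : Set.Iio r ∩ Set.Icc (0:ℝ) 1 = Set.Ico 0 r := by
    ext x
    simp only [Set.mem_inter_iff, Set.mem_Iio, Set.mem_Icc, Set.mem_Ico]
    constructor
    · rintro ⟨h1, h2, h3⟩; exact ⟨h2, h1⟩
    · rintro ⟨h1, h2⟩; exact ⟨h2, h1, le_trans (le_of_lt h2) hr1⟩
  rw [this, Real.volume_Ico, ENNReal.toReal_ofReal (by linarith)]; ring

/-- Proposition 7, sharpness of the binary-outcome variance lower bound. -/
theorem stmt_15 (p q : ℝ) (hp : p ∈ Set.Icc (0 : ℝ) 1) (hq : q ∈ Set.Icc (0 : ℝ) 1) :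
    ∃ (Ω : Type) (_ : MeasurableSpace Ω) (P : MeasureTheory.Measure Ω)
      (_ : MeasureTheory.IsProbabilityMeasure P) (U V : Ω → ℝ),
      Measurable U ∧ Measurable V ∧
      (∀ ω, U ω = 0 ∨ U ω = 1) ∧ (∀ ω, V ω = 0 ∨ V ω = 1) ∧
      (∫ ω, U ω ∂P) = p ∧ (∫ ω, V ω ∂P) = q ∧
      (∫ ω, (U ω - V ω) ^ 2 ∂P) - (∫ ω, (U ω - V ω) ∂P) ^ 2 =
        |p - q| - (p - q) ^ 2 := by
  obtain ⟨hp0, hp1⟩ := hp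
  obtain ⟨hq0, hq1⟩ := hq
  set P : Measure ℝ := MeasureTheory.volume.restrict (Set.Icc (0:ℝ) 1) with hP
  have hprob : IsProbabilityMeasure P := ⟨by simp [hP]⟩
  set U : ℝ → ℝ := (Set.Iio p).indicator 1 with hU
  set V : ℝ → ℝ := (Set.Iio q).indicator 1 with hV
  have hUm : Measurable U := (measurable_const.indicator measurableSet_Iio)
  have hVm : Measurable V := (measurable_const.indicator measurableSet_Iio)
  have hU01 : ∀ ω, U ω = 0 ∨ U ω = 1 := by
    intro ω; by_cases h : ω ∈ Set.Iio p <;> simp [hU, h]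
  have hV01 : ∀ ω, V ω = 0 ∨ V ω = 1 := by
    intro ω; by_cases h : ω ∈ Set.Iio q <;> simp [hV, h]
  have hIU : Integrable U P := (integrable_const (1:ℝ)).indicator measurableSet_Iio
  have hIV : Integrable V P := (integrable_const (1:ℝ)).indicator measurableSet_Iio
  have hIUV : Integrable ((Set.Iio (min p q)).indicator (1 : ℝ → ℝ)) P :=
    (integrable_const (1:ℝ)).indicator measurableSet_Iio
  have hintU : ∫ ω, U ω ∂P = p := aux_int p hp0 hp1
  have hintV : ∫ ω, V ω ∂P = q := aux_int q hq0 hq1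
  have hmin : ∫ ω, (Set.Iio (min p q)).indicator (1 : ℝ → ℝ) ω ∂P = min p q :=
    aux_int (min p q) (le_min hp0 hq0) (min_le_of_left_le hp1)
  -- pointwise identity: (U - V)^2 = U + V - 2 * (indicator of min)
  have hpt : ∀ ω, (U ω - V ω) ^ 2
      = U ω + V ω - 2 * (Set.Iio (min p q)).indicator (1 : ℝ → ℝ) ω := by
    intro ω
    have hmul : U ω * V ω = (Set.Iio (min p q)).indicator (1 : ℝ → ℝ) ω := by
      by_cases h1 : ω < p <;> by_cases h2 : ω < q <;>
        simp [hU, hV, Set.indicator, h1, h2, lt_min_iff]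
    rw [← hmul]
    rcases hU01 ω with h | h <;> rcases hV01 ω with h' | h' <;> rw [h, h'] <;> ring
  have hsq : ∫ ω, (U ω - V ω) ^ 2 ∂P = p + q - 2 * min p q := by
    have : ∫ ω, (U ω - V ω) ^ 2 ∂P
        = ∫ ω, (U ω + V ω - 2 * (Set.Iio (min p q)).indicator (1 : ℝ → ℝ) ω) ∂P := by
      exact integral_congr_ae (Filter.Eventually.of_forall hpt)
    rw [this, integral_sub (show Integrable (fun ω => U ω + V ω) P from hIU.add hIV) (show Integrable (fun ω => 2 * (Set.Iio (min p q)).indicator (1 : ℝ → ℝ) ω) P from hIUV.const_mul 2), integral_add hIU hIV,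
      integral_const_mul, hintU, hintV, hmin]
  have hdiff : ∫ ω, (U ω - V ω) ∂P = p - q := by
    rw [integral_sub hIU hIV, hintU, hintV]
  refine ⟨ℝ, inferInstance, P, hprob, U, V, hUm, hVm, hU01, hV01, hintU, hintV, ?_⟩
  rw [hsq, hdiff]
  rcases le_total p q with h | h
  · rw [min_eq_left h, abs_of_nonpos (by linarith)]; ring
  · rw [min_eq_right h, abs_of_nonneg (by linarith)]; ring
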